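/- (Hoffman–Wielandt inequality) If A and B are n×n Hermitian matrices, then ∑_{i=1}^n (λᵢ(A) − λᵢ(B))² ≤ ‖A−B‖_F², where ‖·‖_F is the Frobenius norm. -/

import Mathlib

open Matrix Finset

-- sum of squares expansion
private lemma hw_expand {n : ℕ} (f g : Fin n → ℝ) :
    ∑ i, (f i - g i) ^ 2 = ∑ i, f i ^ 2 + ∑ i, g i ^ 2 - 2 * ∑ i, f i * g i := by
  rw [Finset.mul_sum, ← Finset.sum_add_distrib, ← Finset.sum_sub_distrib]
  exact Finset.sum_congr rfl fun i _ => by ring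

-- rearrangement step
private lemma hw_rearr {n : ℕ} (α β lamA lamB : Fin n → ℝ)
    (hmonoA : Antitone lamA) (hmonoB : Antitone lamB)
    (σA σB : Equiv.Perm (Fin n)) (hA : lamA = α ∘ σA) (hB : lamB = β ∘ σB)
    (σ : Equiv.Perm (Fin n)) :
    ∑ i, (lamA i - lamB i) ^ 2 ≤ ∑ i, (α i - β (σ i)) ^ 2 := by
  have hα2 : ∑ i, α i ^ 2 = ∑ i, lamA i ^ 2 := by
    subst hA; exact (Equiv.sum_comp σA fun i => α i ^ 2).symm
  have hβ2 : ∑ i, β (σ i) ^ 2 = ∑ i, lamB i ^ 2 := by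
    subst hB
    rw [Equiv.sum_comp σ fun i => β i ^ 2]
    exact (Equiv.sum_comp σB fun i => β i ^ 2).symm
  have hcross : ∑ i, α i * β (σ i) ≤ ∑ i, lamA i * lamB i := by
    have h1 : ∑ i, α i * β (σ i) = ∑ i, lamA i * lamB ((σB⁻¹ * σ * σA) i) := by
      subst hA hB
      rw [← Equiv.sum_comp σA fun i => α i * β (σ i)]
      simp [Function.comp, Equiv.Perm.mul_apply]
    rw [h1]
    exact (hmonoA.monovary hmonoB).sum_mul_comp_perm_le_sum_mul
  have e1 := hw_expand lamA lamB
  have e2 := hw_expand α (fun i => β (σ i))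
  rw [e1, e2]
  linarith

-- doubly stochastic bound via Birkhoff
private lemma hw_ds {n : ℕ} (S : Matrix (Fin n) (Fin n) ℝ)
    (hS : S ∈ doublyStochastic ℝ (Fin n)) (c : Fin n → Fin n → ℝ) (b : ℝ)
    (h : ∀ σ : Equiv.Perm (Fin n), b ≤ ∑ i, c i (σ i)) :
    b ≤ ∑ i, ∑ j, S i j * c i j := by
  obtain ⟨w, hw0, hw1, hwS⟩ := exists_eq_sum_perm_of_mem_doublyStochastic hS
  have hSij : ∀ i j, S i j = ∑ σ : Equiv.Perm (Fin n), w σ * (σ.permMatrix ℝ) i j := by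
    intro i j; rw [← hwS]; simp [Matrix.sum_apply]
  calc b = (∑ σ : Equiv.Perm (Fin n), w σ) * b := by rw [hw1, one_mul]
    _ = ∑ σ : Equiv.Perm (Fin n), w σ * b := by rw [Finset.sum_mul]
    _ ≤ ∑ σ : Equiv.Perm (Fin n), w σ * ∑ i, c i (σ i) :=
        Finset.sum_le_sum fun σ _ => mul_le_mul_of_nonneg_left (h σ) (hw0 σ)
    _ = ∑ i, ∑ j, S i j * c i j := by
        have hpt : ∀ (σ : Equiv.Perm (Fin n)) (i : Fin n),
            ∑ j, (σ.permMatrix ℝ) i j * c i j = c i (σ i) := by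
          intro σ i
          simp only [Equiv.Perm.permMatrix, PEquiv.toMatrix_apply, Equiv.toPEquiv_apply,
            Option.mem_def, Option.some.injEq]
          rw [Finset.sum_eq_single (σ i)]
          · simp
          · intro j _ hj; simp [Ne.symm hj]
          · simp
        symm
        calc ∑ i, ∑ j, S i j * c i j
            = ∑ i, ∑ j, ∑ σ : Equiv.Perm (Fin n), w σ * (σ.permMatrix ℝ) i j * c i j := by
              refine Finset.sum_congr rfl fun i _ => Finset.sum_congr rfl fun j _ => ?_
              rw [hSij i j, Finset.sum_mul]
          _ = ∑ i, ∑ σ : Equiv.Perm (Fin n), ∑ j, w σ * (σ.permMatrix ℝ) i j * c i j := by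
              exact Finset.sum_congr rfl fun i _ => Finset.sum_comm
          _ = ∑ σ : Equiv.Perm (Fin n), ∑ i, ∑ j, w σ * (σ.permMatrix ℝ) i j * c i j := by
              exact Finset.sum_comm
          _ = ∑ σ : Equiv.Perm (Fin n), w σ * ∑ i, c i (σ i) := by
              refine Finset.sum_congr rfl fun σ _ => ?_
              rw [Finset.mul_sum]
              refine Finset.sum_congr rfl fun i _ => ?_
              rw [← hpt σ i, Finset.mul_sum]
              exact Finset.sum_congr rfl fun j _ => by ring

private lemma hw_star_mul (z : ℂ) : star z * z = ((‖z‖ ^ 2 : ℝ) : ℂ) := by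
  rw [Complex.star_def, mul_comm, Complex.mul_conj]
  norm_cast
  rw [Complex.normSq_eq_norm_sq]

-- Frobenius norm as trace
private lemma hw_frob {n : ℕ} (M : Matrix (Fin n) (Fin n) ℂ) :
    ∑ i, ∑ j, ‖M i j‖ ^ 2 = (Matrix.trace (star M * M)).re := by
  have h : Matrix.trace (star M * M) = ((∑ i, ∑ j, ‖M i j‖ ^ 2 : ℝ) : ℂ) := by
    rw [Matrix.trace]
    simp only [Matrix.diag, Matrix.mul_apply, Matrix.star_apply, hw_star_mul]
    rw [Finset.sum_comm]
    push_cast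
    rfl
  rw [h, Complex.ofReal_re]

private lemma hw_frob_conj {n : ℕ} (U V M : Matrix (Fin n) (Fin n) ℂ)
    (hU : U ∈ Matrix.unitaryGroup (Fin n) ℂ) (hV : V ∈ Matrix.unitaryGroup (Fin n) ℂ) :
    ∑ i, ∑ j, ‖(star U * M * V) i j‖ ^ 2 = ∑ i, ∑ j, ‖M i j‖ ^ 2 := by
  rw [hw_frob, hw_frob]
  have hUU : U * star U = 1 := mem_unitaryGroup_iff.mp hU
  have hVV : V * star V = 1 := mem_unitaryGroup_iff.mp hV
  have key : star (star U * M * V) * (star U * M * V) = star V * (star M * M) * V := by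
    rw [Matrix.star_mul, Matrix.star_mul, star_star]
    simp only [Matrix.mul_assoc]
    rw [← Matrix.mul_assoc U (star U) (M * V), hUU, Matrix.one_mul]
  rw [key, Matrix.trace_mul_cycle, ← Matrix.mul_assoc, hVV, Matrix.one_mul]

theorem hoffman_wielandt {n : ℕ} (A B : Matrix (Fin n) (Fin n) ℂ)
    (hA : A.IsHermitian) (hB : B.IsHermitian)
    (lamA : Fin n → ℝ) (hmonoA : Antitone lamA)
    (hpermA : ∃ σ : Equiv.Perm (Fin n), lamA = hA.eigenvalues ∘ σ)
    (lamB : Fin n → ℝ) (hmonoB : Antitone lamB)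
    (hpermB : ∃ σ : Equiv.Perm (Fin n), lamB = hB.eigenvalues ∘ σ) :
    ∑ i, (lamA i - lamB i) ^ 2 ≤ ∑ i, ∑ j, ‖(A - B) i j‖ ^ 2 := by
  obtain ⟨σA, hσA⟩ := hpermA
  obtain ⟨σB, hσB⟩ := hpermB
  set α := hA.eigenvalues with hα
  set β := hB.eigenvalues with hβ
  set U : Matrix (Fin n) (Fin n) ℂ := ↑hA.eigenvectorUnitary with hUdef
  set V : Matrix (Fin n) (Fin n) ℂ := ↑hB.eigenvectorUnitary with hVdef
  have hU : U ∈ Matrix.unitaryGroup (Fin n) ℂ := hA.eigenvectorUnitary.2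
  have hV : V ∈ Matrix.unitaryGroup (Fin n) ℂ := hB.eigenvectorUnitary.2
  set W : Matrix (Fin n) (Fin n) ℂ := star U * V with hWdef
  have hW : W ∈ Matrix.unitaryGroup (Fin n) ℂ := mul_mem (Unitary.star_mem hU) hV
  have hUU : U * star U = 1 := mem_unitaryGroup_iff.mp hU
  have hVV : V * star V = 1 := mem_unitaryGroup_iff.mp hV
  have hVV' : star V * V = 1 := mem_unitaryGroup_iff'.mp hV
  have hDA : star U * A * U = Matrix.diagonal (RCLike.ofReal ∘ α) :=
    by have := hA.conjStarAlgAut_star_eigenvectorUnitary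
       rwa [Unitary.conjStarAlgAut_star_apply] at this
  have hDB : star V * B * V = Matrix.diagonal (RCLike.ofReal ∘ β) :=
    by have := hB.conjStarAlgAut_star_eigenvectorUnitary
       rwa [Unitary.conjStarAlgAut_star_apply] at this
  -- entry formula
  have hconj : star U * (A - B) * V
      = Matrix.diagonal (RCLike.ofReal ∘ α) * W - W * Matrix.diagonal (RCLike.ofReal ∘ β) := by
    have h1 : star U * A * V = Matrix.diagonal (RCLike.ofReal ∘ α) * W := by
      rw [← hDA, hWdef]
      calc star U * A * V = star U * A * (U * star U) * V := by rw [hUU, Matrix.mul_one]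
        _ = star U * A * U * (star U * V) := by simp only [Matrix.mul_assoc]
    have h2 : star U * B * V = W * Matrix.diagonal (RCLike.ofReal ∘ β) := by
      rw [← hDB, hWdef]
      calc star U * B * V = star U * (V * star V) * B * V := by
            rw [hVV, Matrix.mul_one]
        _ = star U * V * (star V * B * V) := by simp only [Matrix.mul_assoc]
    rw [Matrix.mul_sub, Matrix.sub_mul, h1, h2]
  -- Frobenius rewrite
  have hfr : ∑ i, ∑ j, ‖(A - B) i j‖ ^ 2
      = ∑ i, ∑ j, ‖W i j‖ ^ 2 * (α i - β j) ^ 2 := by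
    rw [← hw_frob_conj U V (A - B) hU hV, hconj]
    refine Finset.sum_congr rfl fun i _ => Finset.sum_congr rfl fun j _ => ?_
    simp only [Matrix.sub_apply, Matrix.diagonal_mul, Matrix.mul_diagonal]
    have : (RCLike.ofReal ∘ α) i * W i j - W i j * (RCLike.ofReal ∘ β) j
        = ((α i - β j : ℝ) : ℂ) * W i j := by
      show (↑(α i) : ℂ) * W i j - W i j * ↑(β j) = ↑(α i - β j) * W i j
      push_cast
      ring
    rw [this, norm_mul, mul_pow, Complex.norm_real, Real.norm_eq_abs, sq_abs]
    ring
  -- doubly stochastic matrix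
  set S : Matrix (Fin n) (Fin n) ℝ := fun i j => ‖W i j‖ ^ 2 with hSdef
  have hWW : W * star W = 1 := mem_unitaryGroup_iff.mp hW
  have hWW' : star W * W = 1 := mem_unitaryGroup_iff'.mp hW
  have hrow : ∀ i, ∑ j, S i j = 1 := by
    intro i
    have h1 : ∑ j, W i j * (star W) j i = 1 := by
      rw [← Matrix.mul_apply, hWW, Matrix.one_apply_eq]
    have h2 : ∑ j, ((‖W i j‖ ^ 2 : ℝ) : ℂ) = 1 := by
      rw [← h1]
      refine Finset.sum_congr rfl fun j _ => ?_
      rw [Matrix.star_apply, mul_comm, hw_star_mul]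
    show ∑ j, ‖W i j‖ ^ 2 = 1
    exact_mod_cast h2
  have hcol : ∀ j, ∑ i, S i j = 1 := by
    intro j
    have h1 : ∑ i, (star W) j i * W i j = 1 := by
      rw [← Matrix.mul_apply, hWW', Matrix.one_apply_eq]
    have h2 : ∑ i, ((‖W i j‖ ^ 2 : ℝ) : ℂ) = 1 := by
      rw [← h1]
      refine Finset.sum_congr rfl fun i _ => ?_
      rw [Matrix.star_apply, hw_star_mul]
    show ∑ i, ‖W i j‖ ^ 2 = 1
    exact_mod_cast h2
  have hSmem : S ∈ doublyStochastic ℝ (Fin n) := by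
    rw [mem_doublyStochastic_iff_sum]
    exact ⟨fun i j => by positivity, hrow, hcol⟩
  have hds := hw_ds S hSmem (fun i j => (α i - β j) ^ 2) (∑ i, (lamA i - lamB i) ^ 2)
    (hw_rearr α β lamA lamB hmonoA hmonoB σA σB hσA hσB)
  rw [hfr]
  exact hds
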